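/- Let n, m be positive integers with n ≥ 5 and n ≥ 2m+1, and let Ω be the set of m-subsets of {1,...,n}. Then the alternating group A_n acting naturally on Ω has the same suborbits as S_n: for α ∈ Ω, the (A_n)_α-orbits on Ω are precisely the sets Δ_i = {β : |α ∩ β| = i} for 0 ≤ i ≤ m, so A_n has m+1 suborbits with nontrivial subdegrees C(m,i)·C(n-m,m-i) for 0 ≤ i ≤ m-1. -/

import Mathlib

open Finset

lemma myExistsPerm {X : Type*} [Fintype X] [DecidableEq X]
    (s t : Finset X) (h : s.card = t.card) :
    ∃ g : Equiv.Perm X, ∀ x, g x ∈ t ↔ x ∈ s := by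
  have h' : sᶜ.card = tᶜ.card := by simp [Finset.card_compl, h]
  let e1 : {x // x ∈ s} ≃ {x // x ∈ t} := Finset.equivOfCardEq h
  let e2 : {x // ¬ x ∈ s} ≃ {x // ¬ x ∈ t} :=
    ((Equiv.subtypeEquivRight (fun x => (Finset.mem_compl (s := s)).symm)).trans
      (Finset.equivOfCardEq h')).trans
      (Equiv.subtypeEquivRight (fun x => Finset.mem_compl (s := t)))
  refine ⟨(Equiv.sumCompl (· ∈ s)).symm.trans ((Equiv.sumCongr e1 e2).trans
    (Equiv.sumCompl (· ∈ t))), fun x => ?_⟩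
  by_cases hx : x ∈ s
  · simp only [Equiv.trans_apply, Equiv.sumCompl_symm_apply_of_pos hx,
      Equiv.sumCongr_apply, Sum.map_inl, Equiv.sumCompl_apply_inl]
    exact iff_of_true (e1 ⟨x, hx⟩).2 hx
  · simp only [Equiv.trans_apply, Equiv.sumCompl_symm_apply_of_neg hx,
      Equiv.sumCongr_apply, Sum.map_inr, Equiv.sumCompl_apply_inr]
    exact iff_of_false (e2 ⟨x, hx⟩).2 hx

lemma myExistsPerm2 {X : Type*} [Fintype X] [DecidableEq X]
    (α β γ : Finset X) (hbc : β.card = γ.card)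
    (hint : (α ∩ β).card = (α ∩ γ).card) :
    ∃ g : Equiv.Perm X, (∀ x, g x ∈ α ↔ x ∈ α) ∧ (∀ x, g x ∈ γ ↔ x ∈ β) := by
  have hin : (β.subtype (· ∈ α)).card = (γ.subtype (· ∈ α)).card := by
    rw [Finset.card_subtype, Finset.card_subtype, filter_mem_eq_inter,
      filter_mem_eq_inter, inter_comm, inter_comm γ]
    exact hint
  have hout : (β.subtype (· ∉ α)).card = (γ.subtype (· ∉ α)).card := by
    rw [Finset.card_subtype, Finset.card_subtype, ← sdiff_eq_filter, ← sdiff_eq_filter]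
    have h1 := Finset.card_sdiff_add_card_inter β α
    have h2 := Finset.card_sdiff_add_card_inter γ α
    rw [inter_comm] at h1 h2
    omega
  obtain ⟨gin, hgin⟩ := myExistsPerm (β.subtype (· ∈ α)) (γ.subtype (· ∈ α)) hin
  obtain ⟨gout, hgout⟩ := myExistsPerm (β.subtype (· ∉ α)) (γ.subtype (· ∉ α)) hout
  refine ⟨gin.subtypeCongr gout, fun x => ?_, fun x => ?_⟩
  · by_cases hx : x ∈ α
    · rw [Equiv.Perm.subtypeCongr.left_apply _ _ hx]
      exact iff_of_true (gin ⟨x, hx⟩).2 hx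
    · rw [Equiv.Perm.subtypeCongr.right_apply _ _ hx]
      exact iff_of_false (gout ⟨x, hx⟩).2 hx
  · by_cases hx : x ∈ α
    · rw [Equiv.Perm.subtypeCongr.left_apply _ _ hx]
      have := hgin ⟨x, hx⟩
      simp only [Finset.mem_subtype] at this
      exact this
    · rw [Equiv.Perm.subtypeCongr.right_apply _ _ hx]
      have := hgout ⟨x, hx⟩
      simp only [Finset.mem_subtype] at this
      exact this

lemma mySwapMem {X : Type*} [DecidableEq X] {s : Finset X} {a b : X}
    (h : a ∈ s ↔ b ∈ s) (x : X) : Equiv.swap a b x ∈ s ↔ x ∈ s := by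
  rcases eq_or_ne x a with rfl | hxa
  · rw [Equiv.swap_apply_left]; exact h.symm
  rcases eq_or_ne x b with rfl | hxb
  · rw [Equiv.swap_apply_right]; exact h
  · rw [Equiv.swap_apply_of_ne_of_ne hxa hxb]

lemma myExistsEvenPerm {n : ℕ} (hn : 5 ≤ n)
    (α β γ : Finset (Fin n)) (hbc : β.card = γ.card)
    (hint : (α ∩ β).card = (α ∩ γ).card) :
    ∃ g ∈ alternatingGroup (Fin n),
      (∀ x, g x ∈ α ↔ x ∈ α) ∧ (∀ x, g x ∈ γ ↔ x ∈ β) := by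
  obtain ⟨g, hg1, hg2⟩ := myExistsPerm2 α β γ hbc hint
  rcases Int.units_eq_one_or (Equiv.Perm.sign g) with hs | hs
  · exact ⟨g, Equiv.Perm.mem_alternatingGroup.2 hs, hg1, hg2⟩
  · obtain ⟨a, b, hab, hfab⟩ := Fintype.exists_ne_map_eq_of_card_lt
      (fun x : Fin n => (decide (x ∈ α), decide (x ∈ β))) (by simp; omega)
    have ha : a ∈ α ↔ b ∈ α := by
      have := congrArg Prod.fst hfab; simpa [decide_eq_decide] using this
    have hb : a ∈ β ↔ b ∈ β := by
      have := congrArg Prod.snd hfab; simpa [decide_eq_decide] using this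
    refine ⟨g * Equiv.swap a b, Equiv.Perm.mem_alternatingGroup.2 ?_, fun x => ?_, fun x => ?_⟩
    · rw [map_mul, hs, Equiv.Perm.sign_swap hab]; decide
    · rw [Equiv.Perm.mul_apply, hg1, mySwapMem ha]
    · rw [Equiv.Perm.mul_apply, hg2, mySwapMem hb]

lemma myImageEq {n : ℕ} (g : Equiv.Perm (Fin n)) {s t : Finset (Fin n)}
    (hc : s.card = t.card) (h : ∀ x, g x ∈ t ↔ x ∈ s) : s.image g = t := by
  apply Finset.eq_of_subset_of_card_le
  · intro y hy
    simp only [Finset.mem_image] at hy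
    obtain ⟨x, hx, rfl⟩ := hy
    exact (h x).2 hx
  · rw [Finset.card_image_of_injective _ g.injective, hc]

lemma myExistsBeta {n m i : ℕ} (hi : i ≤ m) (hmn : m ≤ n - m)
    {α : Finset (Fin n)} (hα : α.card = m) :
    ∃ β : Finset (Fin n), β.card = m ∧ (α ∩ β).card = i := by
  obtain ⟨s, hs, hscard⟩ := Finset.exists_subset_card_eq (s := α) (n := i) (by omega)
  obtain ⟨t, ht, htcard⟩ := Finset.exists_subset_card_eq (s := αᶜ) (n := m - i) (by
    rw [Finset.card_compl, hα, Fintype.card_fin]; omega)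
  have hdisj : Disjoint α t := Finset.disjoint_left.2 fun x hx hxt =>
    (Finset.mem_compl.1 (ht hxt)) hx
  refine ⟨s ∪ t, ?_, ?_⟩
  · rw [Finset.card_union_of_disjoint (Finset.disjoint_of_subset_left hs hdisj),
      hscard, htcard]; omega
  · rw [Finset.inter_union_distrib_left, Finset.inter_eq_right.2 hs,
      Finset.disjoint_iff_inter_eq_empty.1 hdisj, Finset.union_empty, hscard]

lemma myCount {n m i : ℕ} (hi : i ≤ m)
    {α : Finset (Fin n)} (hα : α.card = m) :
    ((Finset.univ.powersetCard m).filter (fun β => (α ∩ β).card = i)).card =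
      Nat.choose m i * Nat.choose (n - m) (m - i) := by
  have h1 : (α.powersetCard i ×ˢ αᶜ.powersetCard (m - i)).card =
      Nat.choose m i * Nat.choose (n - m) (m - i) := by
    rw [Finset.card_product, Finset.card_powersetCard, Finset.card_powersetCard,
      hα, Finset.card_compl, hα, Fintype.card_fin]
  rw [← h1]
  apply Finset.card_bij' (fun β _ => (α ∩ β, β \ α)) (fun p _ => p.1 ∪ p.2)
  · intro β hβ
    simp only [Finset.mem_filter, Finset.mem_powersetCard] at hβ
    obtain ⟨⟨-, hβm⟩, hβi⟩ := hβ
    simp only [Finset.mem_product, Finset.mem_powersetCard]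
    refine ⟨⟨Finset.inter_subset_left, hβi⟩, (fun x hx => by
        simp only [Finset.mem_sdiff] at hx
        exact Finset.mem_compl.2 hx.2), ?_⟩
    have := Finset.card_sdiff_add_card_inter β α
    rw [inter_comm] at this; omega
  · intro p hp
    simp only [Finset.mem_product, Finset.mem_powersetCard] at hp
    obtain ⟨⟨hp1, hp1c⟩, hp2, hp2c⟩ := hp
    have hdisj : Disjoint α p.2 := Finset.disjoint_left.2 fun x hx hxt =>
      (Finset.mem_compl.1 (hp2 hxt)) hx
    simp only [Finset.mem_filter, Finset.mem_powersetCard]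
    refine ⟨⟨Finset.subset_univ _, ?_⟩, ?_⟩
    · rw [Finset.card_union_of_disjoint (Finset.disjoint_of_subset_left hp1 hdisj),
        hp1c, hp2c]; omega
    · rw [Finset.inter_union_distrib_left, Finset.inter_eq_right.2 hp1,
        Finset.disjoint_iff_inter_eq_empty.1 hdisj, Finset.union_empty, hp1c]
  · intro β hβ
    rw [inter_comm, union_comm]; exact Finset.sdiff_union_inter β α
  · intro p hp
    simp only [Finset.mem_product, Finset.mem_powersetCard] at hp
    obtain ⟨⟨hp1, hp1c⟩, hp2, hp2c⟩ := hp
    have hdisj : Disjoint α p.2 := Finset.disjoint_left.2 fun x hx hxt =>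
      (Finset.mem_compl.1 (hp2 hxt)) hx
    have h1 : α ∩ (p.1 ∪ p.2) = p.1 := by
      rw [Finset.inter_union_distrib_left, Finset.inter_eq_right.2 hp1,
        Finset.disjoint_iff_inter_eq_empty.1 hdisj, Finset.union_empty]
    have h2 : (p.1 ∪ p.2) \ α = p.2 := by
      rw [Finset.union_sdiff_distrib, Finset.sdiff_eq_empty_iff_subset.2 hp1,
        Finset.empty_union, Finset.sdiff_eq_self_iff_disjoint.2
          (Finset.disjoint_of_subset_left hp2 (by simp [Finset.disjoint_left]))]
    rw [h1, h2]

/-- Suborbits of `A_n` acting on `m`-subsets of `{1,…,n}` (`n ≥ 5`, `n ≥ 2m+1`)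
coincide with those of `S_n`: the `(A_n)_α`-orbits are the sets
`Δ_i = {β : |α ∩ β| = i}` for `0 ≤ i ≤ m`, so there are `m+1` suborbits, with
nontrivial subdegrees `C(m,i)·C(n-m,m-i)` for `0 ≤ i ≤ m-1`. -/
theorem alternating_subsets_suborbits
    (n m : ℕ) (hn : 5 ≤ n) (hnm : 2 * m + 1 ≤ n) (hm : 1 ≤ m)
    (α : Finset (Fin n)) (hα : α.card = m) :
    (∀ β γ : Finset (Fin n), β.card = m → γ.card = m →
      ((∃ g ∈ alternatingGroup (Fin n), α.image g = α ∧ β.image g = γ) ↔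
        (α ∩ β).card = (α ∩ γ).card)) ∧
    {S : Set (Finset (Fin n)) | ∃ β : Finset (Fin n), β.card = m ∧
      S = {γ | γ.card = m ∧ ∃ g ∈ alternatingGroup (Fin n),
        α.image g = α ∧ β.image g = γ}}.ncard = m + 1 ∧
    (∀ i < m,
      ((Finset.univ.powersetCard m).filter (fun β => (α ∩ β).card = i)).card =
        Nat.choose m i * Nat.choose (n - m) (m - i)) := by
  have hmn : m ≤ n - m := by omega
  have part1 : ∀ β γ : Finset (Fin n), β.card = m → γ.card = m →
      ((∃ g ∈ alternatingGroup (Fin n), α.image g = α ∧ β.image g = γ) ↔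
        (α ∩ β).card = (α ∩ γ).card) := by
    intro β γ hβ hγ
    constructor
    · rintro ⟨g, hg, hgα, hgβ⟩
      have himg : (α ∩ β).image g = α ∩ γ := by
        rw [Finset.image_inter _ _ g.injective, hgα, hgβ]
      rw [← himg, Finset.card_image_of_injective _ g.injective]
    · intro h
      obtain ⟨g, hgA, hg1, hg2⟩ := myExistsEvenPerm hn α β γ (hβ.trans hγ.symm) h
      exact ⟨g, hgA, myImageEq g rfl hg1, myImageEq g (hβ.trans hγ.symm) hg2⟩
  refine ⟨part1, ?_, fun i hi => myCount hi.le hα⟩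
  have horb : ∀ β : Finset (Fin n), β.card = m →
      {γ : Finset (Fin n) | γ.card = m ∧ ∃ g ∈ alternatingGroup (Fin n),
        α.image g = α ∧ β.image g = γ} =
      {γ : Finset (Fin n) | γ.card = m ∧ (α ∩ γ).card = (α ∩ β).card} := by
    intro β hβ
    ext γ
    simp only [Set.mem_setOf_eq]
    exact and_congr_right fun hγ => (part1 β γ hβ hγ).trans eq_comm
  have hset : {S : Set (Finset (Fin n)) | ∃ β : Finset (Fin n), β.card = m ∧
      S = {γ | γ.card = m ∧ ∃ g ∈ alternatingGroup (Fin n),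
        α.image g = α ∧ β.image g = γ}} =
      (fun i => {γ : Finset (Fin n) | γ.card = m ∧ (α ∩ γ).card = i}) '' Set.Iic m := by
    ext S
    simp only [Set.mem_setOf_eq, Set.mem_image, Set.mem_Iic]
    constructor
    · rintro ⟨β, hβ, rfl⟩
      exact ⟨(α ∩ β).card,
        le_trans (Finset.card_le_card Finset.inter_subset_left) hα.le, (horb β hβ).symm⟩
    · rintro ⟨i, hi, rfl⟩
      obtain ⟨β, hβ, hβi⟩ := myExistsBeta hi hmn hα
      refine ⟨β, hβ, by rw [horb β hβ, hβi]⟩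
  rw [hset, Set.ncard_image_of_injOn, ← Finset.coe_Iic, Set.ncard_coe_finset, Nat.card_Iic]
  intro i hi j hj hij
  obtain ⟨β, hβ, hβi⟩ := myExistsBeta (Set.mem_Iic.1 hi) hmn hα
  simp only at hij
  have hmem : β ∈ {γ : Finset (Fin n) | γ.card = m ∧ (α ∩ γ).card = i} := ⟨hβ, hβi⟩
  rw [hij] at hmem
  rw [← hβi, hmem.2]
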